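/- For n ≥ 2, every element of ℤⁿ is a sum of at most 2 elements whose coordinate entries are coprime. In particular, for n = 2, every (m, k) ∈ ℤ² can be written as a sum of two vectors each with coprime coordinates, so the word norm on ℤ² with respect to the set of primitive vectors (GL₂(ℤ)-orbit of (1,0)) is bounded by 2. -/
import Mathlib


/-- The word norm in an additive group with respect to the set `S`. -/
noncomputable def addWordNorm {A : Type*} [AddGroup A] (S : Set A) (x : A) : ℕ :=
  sInf {n | ∃ l : List A, (∀ s ∈ l, s ∈ S) ∧ l.length = n ∧ l.sum = x}

lemma gcd_eq_one_of_one_mem {n : ℕ} (f : Fin n → ℤ) (i : Fin n) (h : f i = 1) :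
    Finset.univ.gcd f = 1 := by
  have h1 : Finset.univ.gcd f ∣ 1 := h ▸ Finset.gcd_dvd (Finset.mem_univ i)
  have h2 : 0 ≤ Finset.univ.gcd f :=
    Int.nonneg_of_normalize_eq_self Finset.normalize_gcd
  have := Int.le_of_dvd one_pos h1
  have := Int.eq_one_of_dvd_one h2 h1
  exact this

theorem stmt8 :
    (∀ n : ℕ, 2 ≤ n → ∀ v : Fin n → ℤ, ∃ u w : Fin n → ℤ,
      Finset.univ.gcd u = 1 ∧ Finset.univ.gcd w = 1 ∧ u + w = v) ∧
    (∀ v : ℤ × ℤ, ∃ u w : ℤ × ℤ,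
      IsCoprime u.1 u.2 ∧ IsCoprime w.1 w.2 ∧ u + w = v) ∧
    (∀ v : ℤ × ℤ, addWordNorm {u : ℤ × ℤ | IsCoprime u.1 u.2} v ≤ 2) := by
  refine ⟨?_, ?_, ?_⟩
  · intro n hn v
    set i0 : Fin n := ⟨0, by omega⟩
    set i1 : Fin n := ⟨1, by omega⟩
    have hne : i0 ≠ i1 := by simp [i0, i1, Fin.ext_iff]
    refine ⟨fun i => if i = i0 then v i0 - 1 else if i = i1 then 1 else v i,
            fun i => if i = i0 then 1 else if i = i1 then v i1 - 1 else 0, ?_, ?_, ?_⟩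
    · exact gcd_eq_one_of_one_mem _ i1 (by simp [hne.symm])
    · exact gcd_eq_one_of_one_mem _ i0 (by simp)
    · funext i
      by_cases h0 : i = i0 <;> by_cases h1 : i = i1 <;> simp_all [Pi.add_apply]
  · intro v
    exact ⟨(v.1 - 1, 1), (1, v.2 - 1), isCoprime_one_right, isCoprime_one_left,
      by simp [Prod.ext_iff]⟩
  · intro v
    apply Nat.sInf_le
    refine ⟨[(v.1 - 1, 1), (1, v.2 - 1)], ?_, rfl, ?_⟩
    · intro s hs
      simp only [List.mem_cons, List.not_mem_nil, or_false] at hs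
      rcases hs with h | h <;> subst h
      · exact isCoprime_one_right
      · exact isCoprime_one_left
    · simp [Prod.ext_iff]
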